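/- In the explicit construction with f(x) := Σ_{j=0}^{d−1} cos(2π·2^j·x), for each i ≥ 1 let 𝔉_i be the σ-algebra on [0,1] generated by the intervals [(a−1)/2^(2^((i+1)⁴)), a/2^(2^((i+1)⁴))), a = 1, …, 2^(2^((i+1)⁴)); let Y_i(x) := Σ_{k∈Δ_i} f(n_k x), let Z_i := E[Y_i | 𝔉_i] (conditional expectation with respect to Lebesgue measure on [0,1]), and let A_i := {x ∈ [0,1] : |Z_i(x)| ≥ (d·√ε/2 − 2)·√(2·R^i·log log(R^i)) − 2·d²·i − 3}. Then the sets A_1, A_2, A_3, … are mutually (stochastically) independent with respect to Lebesgue measure on [0,1]. -/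

import Mathlib

open Real MeasureTheory Filter Finset

noncomputable section

/-- The block `Δ_i` of `R^i` consecutive positive integers. -/
def Block (R i : ℕ) : Finset ℕ :=
  Finset.Icc ((R ^ i - R) / (R - 1) + 1) ((R ^ (i + 1) - R) / (R - 1))

/-- `M(i) = ⌈i^(1-ε)⌉`. -/
def Mfun (ε : ℝ) (i : ℕ) : ℕ := ⌈(i : ℝ) ^ (1 - ε)⌉₊

/-- The explicit construction: parameters `ε ∈ (0,1)`, an integer `R > 8/ε`, an integer
`d ≥ 1`, for each `i ≥ 1` a partition of `Δ_i` into consecutive intervals of integers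
`Δ_i^(1) < ⋯ < Δ_i^(M(i))` (element-wise) of essentially equal cardinality, and the
sequence `n_k := 2^(2^(i^4)) * (2^k + m)` for `k ∈ Δ_i^(m)`. -/
structure ExplicitConstruction where
  ε : ℝ
  R : ℕ
  d : ℕ
  sub : ℕ → ℕ → Finset ℕ
  n : ℕ → ℕ
  hε : ε ∈ Set.Ioo (0 : ℝ) 1
  hR : 8 / ε < (R : ℝ)
  hd : 1 ≤ d
  hpart : ∀ i, 1 ≤ i → Block R i = (Finset.Icc 1 (Mfun ε i)).biUnion (sub i)
  hconsec : ∀ i, 1 ≤ i → ∀ m ∈ Finset.Icc 1 (Mfun ε i), ∃ lo hi, sub i m = Finset.Icc lo hi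
  horder : ∀ i, 1 ≤ i → ∀ m ∈ Finset.Icc 1 (Mfun ε i), ∀ m' ∈ Finset.Icc 1 (Mfun ε i),
    m < m' → ∀ k ∈ sub i m, ∀ l ∈ sub i m', k < l
  hcard : ∀ i, 1 ≤ i → ∀ m ∈ Finset.Icc 1 (Mfun ε i),
    |((sub i m).card : ℝ) - (R : ℝ) ^ i / (Mfun ε i : ℝ)| ≤ 1
  hn : ∀ i, 1 ≤ i → ∀ m ∈ Finset.Icc 1 (Mfun ε i), ∀ k ∈ sub i m,
    n k = 2 ^ 2 ^ i ^ 4 * (2 ^ k + m)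

/-- The σ-algebra `𝔉_i` generated by the dyadic intervals
`[(a-1)/2^(2^((i+1)^4)), a/2^(2^((i+1)^4)))`, `a = 1, …, 2^(2^((i+1)^4))`. -/
def Ffield (i : ℕ) : MeasurableSpace ℝ :=
  MeasurableSpace.generateFrom
    {S : Set ℝ | ∃ a : ℕ, 1 ≤ a ∧ a ≤ 2 ^ 2 ^ (i + 1) ^ 4 ∧
      S = Set.Ico (((a : ℝ) - 1) / 2 ^ 2 ^ (i + 1) ^ 4) ((a : ℝ) / 2 ^ 2 ^ (i + 1) ^ 4)}

namespace Indep18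

open scoped ENNReal

/-! ### Dyadic levels -/

def Pd (i : ℕ) : ℕ := 2 ^ 2 ^ i ^ 4
def Qd (i : ℕ) : ℕ := 2 ^ 2 ^ (i + 1) ^ 4
def gd (i : ℕ) : ℕ := 2 ^ (2 ^ (i + 1) ^ 4 - 2 ^ i ^ 4)

lemma Pd_pos (i : ℕ) : 0 < Pd i := Nat.pow_pos (by norm_num)
lemma Qd_pos (i : ℕ) : 0 < Qd i := Nat.pow_pos (by norm_num)
lemma gd_pos (i : ℕ) : 0 < gd i := Nat.pow_pos (by norm_num)

lemma Pd_mul_gd (i : ℕ) : Pd i * gd i = Qd i := by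
  have h : 2 ^ i ^ 4 ≤ 2 ^ (i + 1) ^ 4 :=
    Nat.pow_le_pow_right (by norm_num) (Nat.pow_le_pow_left (Nat.le_succ i) 4)
  rw [Pd, gd, Qd, ← pow_add, Nat.add_sub_cancel' h]

lemma Qd_dvd_Pd {b a : ℕ} (h : b < a) : Qd (b + 1) ∣ Pd (a + 1) :=
  pow_dvd_pow 2 (Nat.pow_le_pow_right (by norm_num) (Nat.pow_le_pow_left (by omega) 4))

/-! ### Floor arithmetic -/

lemma floor_div_nat' (x : ℝ) (d : ℕ) (hd : 0 < d) : ⌊x / (d : ℝ)⌋ = ⌊x⌋ / (d : ℤ) := by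
  have hd0 : (d : ℤ) ≠ 0 := by exact_mod_cast hd.ne'
  have e1 := Int.mul_ediv_add_emod ⌊x⌋ (d : ℤ)
  have e2 := Int.emod_nonneg ⌊x⌋ hd0
  have e3 := Int.emod_lt_of_pos ⌊x⌋ (by exact_mod_cast hd : (0:ℤ) < (d:ℤ))
  have h1 : (d : ℤ) * (⌊x⌋ / d) ≤ ⌊x⌋ := by omega
  have h2 : ⌊x⌋ + 1 ≤ (d : ℤ) * (⌊x⌋ / d) + d := by omega
  have hd' : (0:ℝ) < (d : ℝ) := by exact_mod_cast hd
  refine Int.floor_eq_iff.2 ⟨?_, ?_⟩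
  · rw [le_div_iff₀ hd']
    have h1' : ((⌊x⌋ / (d:ℤ) : ℤ) : ℝ) * d ≤ (⌊x⌋ : ℝ) := by exact_mod_cast by linarith
    exact h1'.trans (Int.floor_le x)
  · rw [div_lt_iff₀ hd']
    have h2' : (⌊x⌋ : ℝ) + 1 ≤ (((⌊x⌋ / (d:ℤ) : ℤ) : ℝ) + 1) * d := by
      have : (⌊x⌋ : ℤ) + 1 ≤ (⌊x⌋ / (d:ℤ) + 1) * d := by linarith [h2]
      exact_mod_cast this
    linarith [Int.lt_floor_add_one x]

lemma floor_mul_dvd (x : ℝ) {Q P : ℕ} (hQ : 0 < Q) (hP : 0 < P) (hdvd : Q ∣ P) :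
    ⌊(Q : ℝ) * x⌋ = ⌊(P : ℝ) * x⌋ / ((P / Q : ℕ) : ℤ) := by
  obtain ⟨c, rfl⟩ := hdvd
  have hc : 0 < c := by
    rcases Nat.eq_zero_or_pos c with h | h
    · subst h; rw [Nat.mul_zero] at hP; exact absurd hP (lt_irrefl 0)
    · exact h
  rw [Nat.mul_div_cancel_left _ hQ]
  have hQ' : (0:ℝ) < (Q : ℝ) := by exact_mod_cast hQ
  have hc' : (0:ℝ) < (c : ℝ) := by exact_mod_cast hc
  have key : (Q : ℝ) * x = ((Q * c : ℕ) : ℝ) * x / (c : ℝ) := by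
    push_cast; field_simp
  rw [key, floor_div_nat' _ _ hc]

lemma mem_Ico_floor {Q : ℕ} (hQ : 0 < Q) {b : ℤ} {x : ℝ}
    (h : x ∈ Set.Ico ((b : ℝ) / (Q : ℝ)) (((b : ℝ) + 1) / (Q : ℝ))) :
    ⌊(Q : ℝ) * x⌋ = b := by
  have hQ' : (0:ℝ) < (Q : ℝ) := by exact_mod_cast hQ
  refine Int.floor_eq_iff.2 ⟨?_, ?_⟩
  · have := h.1; rw [div_le_iff₀ hQ'] at this; linarith [mul_comm x (Q:ℝ)]
  · have := h.2; rw [lt_div_iff₀ hQ'] at this; push_cast; linarith [mul_comm x (Q:ℝ)]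

/-! ### Measure of floor-defined sets -/

lemma setA_eq (Q : ℕ) (hQ : 0 < Q) (p : ℤ → Prop) [DecidablePred p] :
    {x : ℝ | x ∈ Set.Ico (0:ℝ) 1 ∧ p ⌊(Q : ℝ) * x⌋} =
      ⋃ a ∈ (Finset.range Q).filter (fun a : ℕ => p (a : ℤ)),
        Set.Ico ((a : ℝ) / Q) (((a : ℝ) + 1) / Q) := by
  have hQ' : (0:ℝ) < (Q : ℝ) := by exact_mod_cast hQ
  ext x
  simp only [Set.mem_setOf_eq, Set.mem_iUnion, Finset.mem_filter, Finset.mem_range,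
    exists_prop, Set.mem_Ico]
  constructor
  · rintro ⟨⟨hx0, hx1⟩, hp⟩
    have hb0 : 0 ≤ ⌊(Q:ℝ) * x⌋ := Int.floor_nonneg.2 (by positivity)
    have hbQ : ⌊(Q:ℝ) * x⌋ < (Q : ℤ) := by
      apply Int.floor_lt.2; push_cast; nlinarith
    refine ⟨⌊(Q:ℝ) * x⌋.toNat, ⟨by omega, ?_⟩, ?_, ?_⟩
    · rwa [Int.toNat_of_nonneg hb0]
    · rw [div_le_iff₀ hQ']
      have := Int.floor_le ((Q:ℝ) * x)
      rw [show ((⌊(Q:ℝ) * x⌋.toNat : ℕ) : ℝ) = ((⌊(Q:ℝ) * x⌋ : ℤ) : ℝ) by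
        exact_mod_cast congrArg (Int.cast : ℤ → ℝ) (Int.toNat_of_nonneg hb0)]
      linarith [mul_comm x (Q:ℝ)]
    · rw [lt_div_iff₀ hQ']
      have := Int.lt_floor_add_one ((Q:ℝ) * x)
      rw [show ((⌊(Q:ℝ) * x⌋.toNat : ℕ) : ℝ) = ((⌊(Q:ℝ) * x⌋ : ℤ) : ℝ) by
        exact_mod_cast congrArg (Int.cast : ℤ → ℝ) (Int.toNat_of_nonneg hb0)]
      linarith [mul_comm x (Q:ℝ)]
  · rintro ⟨a, ⟨haQ, hpa⟩, hax, hax'⟩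
    have hfl : ⌊(Q:ℝ) * x⌋ = (a : ℤ) := by
      apply mem_Ico_floor hQ
      constructor
      · push_cast
        exact hax
      · push_cast
        exact hax'
    have h1 : (0:ℝ) ≤ (a : ℝ) / Q := by positivity
    have haQ' : (a : ℝ) + 1 ≤ (Q : ℝ) := by exact_mod_cast haQ
    have hx1 : x < 1 := lt_of_lt_of_le hax' (by rw [div_le_one hQ']; exact haQ')
    exact ⟨⟨le_trans h1 hax, hx1⟩, by rw [hfl]; exact hpa⟩

lemma measA (Q : ℕ) (hQ : 0 < Q) (p : ℤ → Prop) [DecidablePred p] :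
    volume {x : ℝ | x ∈ Set.Ico (0:ℝ) 1 ∧ p ⌊(Q : ℝ) * x⌋} =
      (((Finset.range Q).filter (fun a : ℕ => p (a : ℤ))).card : ℝ≥0∞) / (Q : ℝ≥0∞) := by
  have hQ' : (0:ℝ) < (Q : ℝ) := by exact_mod_cast hQ
  rw [setA_eq Q hQ p, measure_biUnion_finset]
  · have hone : ∀ a ∈ (Finset.range Q).filter (fun a : ℕ => p (a : ℤ)),
        volume (Set.Ico ((a : ℝ) / Q) (((a : ℝ) + 1) / Q)) = ENNReal.ofReal (1 / Q) := by
      intro a _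
      rw [Real.volume_Ico]
      congr 1
      field_simp
      ring
    rw [Finset.sum_congr rfl hone, Finset.sum_const, nsmul_eq_mul]
    have : ENNReal.ofReal (1 / (Q:ℝ)) = ((Q : ℝ≥0∞))⁻¹ := by
      rw [one_div, ENNReal.ofReal_inv_of_pos hQ', ENNReal.ofReal_natCast]
    rw [this, div_eq_mul_inv]
  · intro a ha b hb hab
    simp only [Finset.coe_filter, Set.mem_setOf_eq] at ha hb
    apply Set.disjoint_left.2
    intro x hxa hxb
    have h1 : ⌊(Q:ℝ) * x⌋ = (a : ℤ) := mem_Ico_floor hQ (by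
      refine ⟨?_, ?_⟩
      · push_cast
        exact hxa.1
      · push_cast
        exact hxa.2)
    have h2 : ⌊(Q:ℝ) * x⌋ = (b : ℤ) := mem_Ico_floor hQ (by
      refine ⟨?_, ?_⟩
      · push_cast
        exact hxb.1
      · push_cast
        exact hxb.2)
    exact hab (by exact_mod_cast h1.symm.trans h2)
  · exact fun b _ => measurableSet_Ico

lemma count_split (P K : ℕ) (hK : 0 < K) (p t : ℤ → Prop)
    [DecidablePred p] [DecidablePred t] :
    ((Finset.range (P * K)).filter
        (fun a : ℕ => p ((a : ℤ) / (K : ℤ)) ∧ t ((a : ℤ) % (K : ℤ)))).card =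
      ((Finset.range P).filter (fun n : ℕ => p (n : ℤ))).card *
        ((Finset.range K).filter (fun s : ℕ => t (s : ℤ))).card := by
  rw [← Finset.card_product]
  apply Finset.card_bij' (fun a _ => (a / K, a % K)) (fun b _ => b.1 * K + b.2)
  · intro a ha
    simp only [Finset.mem_filter, Finset.mem_range] at ha
    obtain ⟨haPK, hp, ht⟩ := ha
    simp only [Finset.mem_product, Finset.mem_filter, Finset.mem_range]
    refine ⟨⟨?_, ?_⟩, ?_, ?_⟩
    · exact Nat.div_lt_of_lt_mul (by rwa [mul_comm] at haPK)
    · rw [Int.natCast_div]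
      exact hp
    · exact Nat.mod_lt _ hK
    · rw [Int.natCast_mod]
      exact ht
  · intro b hb
    simp only [Finset.mem_product, Finset.mem_filter, Finset.mem_range] at hb
    obtain ⟨⟨hb1, hp⟩, hb2, ht⟩ := hb
    simp only [Finset.mem_filter, Finset.mem_range]
    have hdiv : (b.1 * K + b.2) / K = b.1 := by
      rw [mul_comm, Nat.mul_add_div hK, Nat.div_eq_of_lt hb2, Nat.add_zero]
    have hmod : (b.1 * K + b.2) % K = b.2 := by
      rw [add_comm, Nat.add_mul_mod_self_right, Nat.mod_eq_of_lt hb2]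
    refine ⟨?_, ?_, ?_⟩
    · calc b.1 * K + b.2 < b.1 * K + K := by omega
        _ = (b.1 + 1) * K := by ring
        _ ≤ P * K := Nat.mul_le_mul_right _ (by omega)
    · rw [← Int.natCast_div, hdiv]; exact hp
    · rw [← Int.natCast_mod, hmod]; exact ht
  · intro a _
    rw [mul_comm]
    exact Nat.div_add_mod a K
  · intro b hb
    simp only [Finset.mem_product, Finset.mem_filter, Finset.mem_range] at hb
    obtain ⟨⟨hb1, _⟩, hb2, _⟩ := hb
    have hdiv : (b.1 * K + b.2) / K = b.1 := by
      rw [mul_comm, Nat.mul_add_div hK, Nat.div_eq_of_lt hb2, Nat.add_zero]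
    have hmod : (b.1 * K + b.2) % K = b.2 := by
      rw [add_comm, Nat.add_mul_mod_self_right, Nat.mod_eq_of_lt hb2]
    rw [hdiv, hmod]

lemma measB (P K : ℕ) (hP : 0 < P) (hK : 0 < K) (p t : ℤ → Prop)
    [DecidablePred p] [DecidablePred t] :
    volume {x : ℝ | x ∈ Set.Ico (0:ℝ) 1 ∧
        p ⌊(P : ℝ) * x⌋ ∧ t (⌊((P * K : ℕ) : ℝ) * x⌋ % (K : ℤ))} =
      volume {x : ℝ | x ∈ Set.Ico (0:ℝ) 1 ∧ p ⌊(P : ℝ) * x⌋} *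
        volume {x : ℝ | x ∈ Set.Ico (0:ℝ) 1 ∧ t (⌊((P * K : ℕ) : ℝ) * x⌋ % (K : ℤ))} := by
  have hPK : 0 < P * K := Nat.mul_pos hP hK
  have hfloor : ∀ x : ℝ, ⌊(P : ℝ) * x⌋ = ⌊((P * K : ℕ) : ℝ) * x⌋ / ((K : ℕ) : ℤ) := by
    intro x
    have := floor_mul_dvd x hP hPK (dvd_mul_right P K)
    rwa [Nat.mul_div_cancel_left _ hP] at this
  have hset1 : {x : ℝ | x ∈ Set.Ico (0:ℝ) 1 ∧
      p ⌊(P : ℝ) * x⌋ ∧ t (⌊((P * K : ℕ) : ℝ) * x⌋ % (K : ℤ))} =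
      {x : ℝ | x ∈ Set.Ico (0:ℝ) 1 ∧
        (p (⌊((P * K : ℕ) : ℝ) * x⌋ / (K : ℤ)) ∧ t (⌊((P * K : ℕ) : ℝ) * x⌋ % (K : ℤ)))} := by
    ext x; rw [Set.mem_setOf_eq, Set.mem_setOf_eq, hfloor x]
  have hset2 : {x : ℝ | x ∈ Set.Ico (0:ℝ) 1 ∧ p ⌊(P : ℝ) * x⌋} =
      {x : ℝ | x ∈ Set.Ico (0:ℝ) 1 ∧ p (⌊((P * K : ℕ) : ℝ) * x⌋ / (K : ℤ))} := by
    ext x; rw [Set.mem_setOf_eq, Set.mem_setOf_eq, hfloor x]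
  have v1 : volume {x : ℝ | x ∈ Set.Ico (0:ℝ) 1 ∧
      (p (⌊((P * K : ℕ) : ℝ) * x⌋ / (K : ℤ)) ∧ t (⌊((P * K : ℕ) : ℝ) * x⌋ % (K : ℤ)))} =
      (((Finset.range (P * K)).filter
        (fun a : ℕ => p ((a : ℤ) / (K : ℤ)) ∧ t ((a : ℤ) % (K : ℤ)))).card : ℝ≥0∞) /
        ((P * K : ℕ) : ℝ≥0∞) :=
    measA (P * K) hPK (fun a : ℤ => p (a / (K : ℤ)) ∧ t (a % (K : ℤ)))
  have v2 : volume {x : ℝ | x ∈ Set.Ico (0:ℝ) 1 ∧ p (⌊((P * K : ℕ) : ℝ) * x⌋ / (K : ℤ))} =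
      (((Finset.range (P * K)).filter
        (fun a : ℕ => p ((a : ℤ) / (K : ℤ)))).card : ℝ≥0∞) / ((P * K : ℕ) : ℝ≥0∞) :=
    measA (P * K) hPK (fun a : ℤ => p (a / (K : ℤ)))
  have v3 : volume {x : ℝ | x ∈ Set.Ico (0:ℝ) 1 ∧ t (⌊((P * K : ℕ) : ℝ) * x⌋ % (K : ℤ))} =
      (((Finset.range (P * K)).filter
        (fun a : ℕ => t ((a : ℤ) % (K : ℤ)))).card : ℝ≥0∞) / ((P * K : ℕ) : ℝ≥0∞) :=
    measA (P * K) hPK (fun a : ℤ => t (a % (K : ℤ)))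
  rw [hset1, hset2, v1, v2, v3, count_split P K hK p t]
  have hcount2 : ((Finset.range (P * K)).filter
      (fun a : ℕ => p ((a : ℤ) / (K : ℤ)))).card =
      ((Finset.range P).filter (fun n : ℕ => p (n : ℤ))).card * K := by
    have := count_split P K hK p (fun _ => True)
    simpa using this
  have hcount3 : ((Finset.range (P * K)).filter
      (fun a : ℕ => t ((a : ℤ) % (K : ℤ)))).card =
      P * ((Finset.range K).filter (fun s : ℕ => t (s : ℤ))).card := by
    have := count_split P K hK (fun _ => True) t
    simpa using this
  rw [hcount2, hcount3]
  set cp := ((Finset.range P).filter (fun n : ℕ => p (n : ℤ))).card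
  set ct := ((Finset.range K).filter (fun s : ℕ => t (s : ℤ))).card
  push_cast
  rw [show ((cp : ℝ≥0∞) * K) / ((P : ℝ≥0∞) * K) = (cp : ℝ≥0∞) / P from
    ENNReal.mul_div_mul_right _ _ (by exact_mod_cast hK.ne') (ENNReal.natCast_ne_top K)]
  rw [show ((P : ℝ≥0∞) * ct) / ((P : ℝ≥0∞) * K) = (ct : ℝ≥0∞) / K from
    ENNReal.mul_div_mul_left _ _ (by exact_mod_cast hP.ne') (ENNReal.natCast_ne_top P)]
  have hP0 : (P : ℝ≥0∞) ≠ 0 := by exact_mod_cast hP.ne'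
  rw [div_eq_mul_inv, div_eq_mul_inv, div_eq_mul_inv,
    ENNReal.mul_inv (Or.inl hP0) (Or.inl (ENNReal.natCast_ne_top P))]
  ring

/-! ### The σ-algebras -/

lemma Ffield_le (i : ℕ) : Ffield i ≤ (inferInstance : MeasurableSpace ℝ) := by
  apply MeasurableSpace.generateFrom_le
  rintro t ⟨a, -, -, rfl⟩
  exact measurableSet_Ico

lemma Qd_cast_eq (i : ℕ) : ((Qd i : ℕ) : ℝ) = (2 : ℝ) ^ 2 ^ (i + 1) ^ 4 := by
  rw [Qd]; push_cast; ring

lemma atom_mem (i : ℕ) {b : ℤ} (hb0 : 0 ≤ b) (hb : b < (Qd i : ℤ)) :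
    MeasurableSet[Ffield i]
      (Set.Ico ((b : ℝ) / (Qd i : ℝ)) (((b : ℝ) + 1) / (Qd i : ℝ))) := by
  apply MeasurableSpace.measurableSet_generateFrom
  refine ⟨b.toNat + 1, by omega, ?_, ?_⟩
  · have : (b.toNat + 1 : ℕ) ≤ Qd i := by omega
    exact this
  · have hbr : ((b.toNat : ℕ) : ℝ) = (b : ℝ) := by
      exact_mod_cast congrArg (Int.cast : ℤ → ℝ) (Int.toNat_of_nonneg hb0)
    have h1 : ((b.toNat + 1 : ℕ) : ℝ) - 1 = (b : ℝ) := by push_cast; linarith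
    have h2 : ((b.toNat + 1 : ℕ) : ℝ) = (b : ℝ) + 1 := by push_cast; linarith
    rw [h1, h2, Qd_cast_eq]

lemma subset_or_disjoint (i : ℕ) {s : Set ℝ} (hs : MeasurableSet[Ffield i] s)
    {b : ℤ} (hb0 : 0 ≤ b) (hb : b < (Qd i : ℤ)) :
    Set.Ico ((b : ℝ) / (Qd i : ℝ)) (((b : ℝ) + 1) / (Qd i : ℝ)) ⊆ s ∨
      Set.Ico ((b : ℝ) / (Qd i : ℝ)) (((b : ℝ) + 1) / (Qd i : ℝ)) ∩ s = ∅ := by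
  set I := Set.Ico ((b : ℝ) / (Qd i : ℝ)) (((b : ℝ) + 1) / (Qd i : ℝ)) with hI
  induction s, hs using MeasurableSpace.generateFrom_induction with
  | hC t ht _ =>
    obtain ⟨a, ha1, haQ, rfl⟩ := ht
    by_cases hab : (a : ℤ) = b + 1
    · left
      have h1 : ((a : ℝ) - 1) / (2:ℝ) ^ 2 ^ (i + 1) ^ 4 = (b : ℝ) / (Qd i : ℝ) := by
        rw [Qd_cast_eq]
        congr 1
        have : ((a : ℤ) : ℝ) = ((b + 1 : ℤ) : ℝ) := by
          exact_mod_cast congrArg (Int.cast : ℤ → ℝ) hab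
        push_cast at this ⊢; linarith
      have h2 : (a : ℝ) / (2:ℝ) ^ 2 ^ (i + 1) ^ 4 = ((b : ℝ) + 1) / (Qd i : ℝ) := by
        rw [Qd_cast_eq]
        congr 1
        have : ((a : ℤ) : ℝ) = ((b + 1 : ℤ) : ℝ) := by
          exact_mod_cast congrArg (Int.cast : ℤ → ℝ) hab
        push_cast at this ⊢; linarith
      rw [h1, h2]
    · right
      rw [Set.eq_empty_iff_forall_notMem]
      rintro x ⟨hxI, hxt⟩
      have hf1 : ⌊(Qd i : ℝ) * x⌋ = b := mem_Ico_floor (Qd_pos i) hxI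
      have hf2 : ⌊(Qd i : ℝ) * x⌋ = (a : ℤ) - 1 := by
        apply mem_Ico_floor (Qd_pos i)
        have e1 : (((a : ℤ) - 1 : ℤ) : ℝ) / (Qd i : ℝ) = ((a:ℝ) - 1) / (2:ℝ) ^ 2 ^ (i+1) ^ 4 := by
          rw [Qd_cast_eq]; push_cast; ring_nf
        have e2 : ((((a : ℤ) - 1 : ℤ) : ℝ) + 1) / (Qd i : ℝ) = (a:ℝ) / (2:ℝ) ^ 2 ^ (i+1) ^ 4 := by
          rw [Qd_cast_eq]; push_cast; ring_nf
        rw [e1, e2]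
        exact hxt
      omega
  | empty => right; exact Set.inter_empty _
  | compl t htm IH =>
    rcases IH with h | h
    · right
      rw [Set.eq_empty_iff_forall_notMem]
      rintro x ⟨hxI, hxc⟩
      exact hxc (h hxI)
    · left
      intro x hx
      intro hxt
      rw [Set.eq_empty_iff_forall_notMem] at h
      exact h x ⟨hx, hxt⟩
  | iUnion f hfm IH =>
    by_cases h : ∃ n, I ⊆ f n
    · obtain ⟨n, hn⟩ := h
      exact Or.inl (hn.trans (Set.subset_iUnion f n))
    · right
      rw [Set.inter_iUnion]
      apply Set.iUnion_eq_empty.2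
      intro n
      exact (IH n).resolve_left (fun hc => h ⟨n, hc⟩)

/-! ### Properties of the construction -/

section Construction

variable (E : ExplicitConstruction) (f : ℝ → ℝ)
  (hf : ∀ x, f x = ∑ j ∈ Finset.range E.d, Real.cos (2 * Real.pi * 2 ^ j * x))
  (Y : ℕ → ℝ → ℝ)
  (hY : ∀ i x, Y i x = ∑ k ∈ Block E.R i, f ((E.n k : ℝ) * x))
  (Z : ℕ → ℝ → ℝ)
  (hZ : ∀ i, Z i = (volume.restrict (Set.Icc (0:ℝ) 1))[Y i | Ffield i])

include hf in
lemma f_add_int (y : ℝ) (N : ℤ) : f (y + (N : ℝ)) = f y := by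
  rw [hf, hf]
  refine Finset.sum_congr rfl fun j _ => ?_
  have h : 2 * Real.pi * 2 ^ j * (y + (N : ℝ)) =
      2 * Real.pi * 2 ^ j * y + ((2 ^ j * N : ℤ) : ℝ) * (2 * Real.pi) := by
    push_cast; ring
  rw [h, Real.cos_add_int_mul_two_pi]

include hf hY in
lemma Y_cont (i : ℕ) : Continuous (Y i) := by
  have hfc : Continuous f := by
    have h : f = fun x => ∑ j ∈ Finset.range E.d, Real.cos (2 * Real.pi * 2 ^ j * x) :=
      funext hf
    rw [h]
    exact continuous_finset_sum _ fun j _ =>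
      Real.continuous_cos.comp (continuous_const.mul continuous_id)
  have h : Y i = fun x => ∑ k ∈ Block E.R i, f ((E.n k : ℝ) * x) := funext (hY i)
  rw [h]
  exact continuous_finset_sum _ fun k _ => hfc.comp (continuous_const.mul continuous_id)

lemma dvd_n (i : ℕ) (hi : 1 ≤ i) {k : ℕ} (hk : k ∈ Block E.R i) : (Pd i : ℕ) ∣ E.n k := by
  have hB := E.hpart i hi
  rcases Finset.mem_biUnion.1 (hB ▸ hk) with ⟨m, hm, hkm⟩
  rw [E.hn i hi m hm k hkm]
  exact Dvd.intro _ rfl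

include hf hY in
lemma Y_periodic (i : ℕ) (hi : 1 ≤ i) (s : ℤ) (x : ℝ) :
    Y i (x + (s : ℝ) / (Pd i : ℝ)) = Y i x := by
  rw [hY, hY]
  refine Finset.sum_congr rfl fun k hk => ?_
  obtain ⟨c, hc⟩ := dvd_n E i hi hk
  have hP' : (0:ℝ) < (Pd i : ℝ) := by exact_mod_cast Pd_pos i
  have h : (E.n k : ℝ) * (x + (s : ℝ) / (Pd i : ℝ)) =
      (E.n k : ℝ) * x + ((s * c : ℤ) : ℝ) := by
    rw [hc]; push_cast; field_simp
  rw [h, f_add_int E f hf]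

include hf hY in
lemma integral_shift (i : ℕ) (hi : 1 ≤ i) (s : ℤ) (u v : ℝ) :
    ∫ t in Set.Ico (u + (s : ℝ) / (Pd i : ℝ)) (v + (s : ℝ) / (Pd i : ℝ)), Y i t =
      ∫ t in Set.Ico u v, Y i t := by
  set c : ℝ := (s : ℝ) / (Pd i : ℝ) with hcdef
  rcases le_or_gt u v with huv | huv
  · have h1 : ∫ t in Set.Ico u v, Y i t = ∫ t in u..v, Y i t := by
      rw [intervalIntegral.integral_of_le huv, integral_Ico_eq_integral_Ioo,
        integral_Ioc_eq_integral_Ioo]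
    have h2 : ∫ t in Set.Ico (u + c) (v + c), Y i t = ∫ t in (u + c)..(v + c), Y i t := by
      rw [intervalIntegral.integral_of_le (by linarith), integral_Ico_eq_integral_Ioo,
        integral_Ioc_eq_integral_Ioo]
    rw [h1, h2, ← intervalIntegral.integral_comp_add_right (fun t => Y i t) c]
    simp only [hcdef, Y_periodic E f hf Y hY i hi s]
  · have h1 : ¬ u < v := not_lt.2 huv.le
    have h2 : ¬ u + c < v + c := by simpa using h1
    rw [Set.Ico_eq_empty h1, Set.Ico_eq_empty h2]

include hf hY hZ in
lemma Z_eq_of_mod (i : ℕ) (hi : 1 ≤ i) {x y : ℝ}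
    (hx : x ∈ Set.Ico (0:ℝ) 1) (hy : y ∈ Set.Ico (0:ℝ) 1)
    (hxy : ⌊(Qd i : ℝ) * x⌋ % (gd i : ℤ) = ⌊(Qd i : ℝ) * y⌋ % (gd i : ℤ)) :
    Z i x = Z i y := by
  classical
  set μ' := volume.restrict (Set.Icc (0:ℝ) 1) with hμ'
  have hm := Ffield_le i
  haveI : IsFiniteMeasure μ' := by
    constructor
    rw [hμ', Measure.restrict_apply MeasurableSet.univ, Set.univ_inter, Real.volume_Icc]
    simp
  have hQ0 : 0 < Qd i := Qd_pos i
  have hQ' : (0:ℝ) < (Qd i : ℝ) := by exact_mod_cast hQ0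
  have hint : Integrable (Y i) μ' := by
    rw [hμ']
    exact (Y_cont E f hf Y hY i).integrableOn_Icc
  have hZsm : StronglyMeasurable[Ffield i] (Z i) := by
    rw [hZ i]; exact stronglyMeasurable_condExp
  have key : ∀ u : ℝ, u ∈ Set.Ico (0:ℝ) 1 →
      Z i u * (1 / (Qd i : ℝ)) =
        ∫ t in Set.Ico ((⌊(Qd i : ℝ) * u⌋ : ℝ) / (Qd i : ℝ))
          (((⌊(Qd i : ℝ) * u⌋ : ℝ) + 1) / (Qd i : ℝ)), Y i t := by
    intro u hu
    set b : ℤ := ⌊(Qd i : ℝ) * u⌋ with hb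
    have hb0 : 0 ≤ b := Int.floor_nonneg.2 (mul_nonneg hQ'.le hu.1)
    have hbQ : b < (Qd i : ℤ) := by
      apply Int.floor_lt.2
      push_cast
      nlinarith [hu.2]
    set I := Set.Ico ((b : ℝ) / (Qd i : ℝ)) (((b : ℝ) + 1) / (Qd i : ℝ)) with hIdef
    have hImeas : MeasurableSet I := measurableSet_Ico
    have hIF : MeasurableSet[Ffield i] I := atom_mem i hb0 hbQ
    have hIsub : I ⊆ Set.Icc 0 1 := by
      intro t ht
      have hbR : (0:ℝ) ≤ (b : ℝ) := by exact_mod_cast hb0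
      have hbR2 : (b : ℝ) + 1 ≤ (Qd i : ℝ) := by exact_mod_cast hbQ
      constructor
      · exact le_trans (div_nonneg hbR hQ'.le) ht.1
      · exact le_of_lt (lt_of_lt_of_le ht.2 (by rw [div_le_one hQ']; exact hbR2))
    have hu_mem : u ∈ I := by
      constructor
      · rw [div_le_iff₀ hQ']
        have := Int.floor_le ((Qd i : ℝ) * u)
        rw [← hb] at this
        linarith [mul_comm u (Qd i : ℝ)]
      · rw [lt_div_iff₀ hQ']
        have := Int.lt_floor_add_one ((Qd i : ℝ) * u)
        rw [← hb] at this
        linarith [mul_comm u (Qd i : ℝ)]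
    have hconst : ∀ t ∈ I, Z i t = Z i u := by
      intro t ht
      have hmeasZ : Measurable[Ffield i] (Z i) := hZsm.measurable
      have hpre : MeasurableSet[Ffield i] (Z i ⁻¹' {Z i u}) :=
        hmeasZ (measurableSet_singleton _)
      rcases subset_or_disjoint i hpre hb0 hbQ with hsub | hdis
      · exact hsub ht
      · exfalso
        rw [Set.eq_empty_iff_forall_notMem] at hdis
        exact hdis u ⟨hu_mem, rfl⟩
    have hcond : ∫ t in I, Z i t ∂μ' = ∫ t in I, Y i t ∂μ' := by
      conv_lhs => rw [hZ i]
      exact setIntegral_condExp hm hint hIF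
    have hrr : ∀ g : ℝ → ℝ, ∫ t in I, g t ∂μ' = ∫ t in I, g t := by
      intro g
      rw [hμ', Measure.restrict_restrict hImeas, Set.inter_eq_self_of_subset_left hIsub]
    have hleft : ∫ t in I, Z i t = Z i u * (1 / (Qd i : ℝ)) := by
      rw [setIntegral_congr_fun hImeas hconst, setIntegral_const, hIdef, measureReal_def, Real.volume_Ico]
      have h1 : ((b : ℝ) + 1) / (Qd i : ℝ) - (b : ℝ) / (Qd i : ℝ) = 1 / (Qd i : ℝ) := by
        field_simp
        ring
      rw [h1, ENNReal.toReal_ofReal (by positivity), smul_eq_mul, mul_comm]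
    calc Z i u * (1 / (Qd i : ℝ)) = ∫ t in I, Z i t := hleft.symm
      _ = ∫ t in I, Z i t ∂μ' := (hrr _).symm
      _ = ∫ t in I, Y i t ∂μ' := hcond
      _ = ∫ t in I, Y i t := hrr _
  have hx' := key x hx
  have hy' := key y hy
  set b : ℤ := ⌊(Qd i : ℝ) * x⌋ with hbdef
  set c : ℤ := ⌊(Qd i : ℝ) * y⌋ with hcdef
  have hdvd : (gd i : ℤ) ∣ c - b := by
    have : (c - b) % (gd i : ℤ) = 0 := by
      rw [Int.sub_emod, ← hxy, sub_self, Int.zero_emod]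
    exact Int.dvd_of_emod_eq_zero this
  obtain ⟨s, hs⟩ := hdvd
  have hPg : (Pd i : ℝ) * (gd i : ℝ) = (Qd i : ℝ) := by exact_mod_cast Pd_mul_gd i
  have hP' : (0:ℝ) < (Pd i : ℝ) := by exact_mod_cast Pd_pos i
  have hcR : (c : ℝ) = (b : ℝ) + (gd i : ℝ) * (s : ℝ) := by
    have : c = b + (gd i : ℤ) * s := by linarith [hs]
    exact_mod_cast congrArg (fun z : ℤ => (z : ℝ)) this
  have hgne : (gd i : ℝ) ≠ 0 := by
    have hgpos : (0:ℝ) < (gd i : ℝ) := by exact_mod_cast gd_pos i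
    exact ne_of_gt hgpos
  have hsP : (s : ℝ) / (Pd i : ℝ) = ((gd i : ℝ) * (s : ℝ)) / (Qd i : ℝ) := by
    rw [← hPg, mul_comm (Pd i : ℝ) (gd i : ℝ), mul_div_mul_left _ _ hgne]
  have e1 : (c : ℝ) / (Qd i : ℝ) = (b : ℝ) / (Qd i : ℝ) + (s : ℝ) / (Pd i : ℝ) := by
    rw [hcR, hsP, add_div]
  have e2 : ((c : ℝ) + 1) / (Qd i : ℝ) =
      ((b : ℝ) + 1) / (Qd i : ℝ) + (s : ℝ) / (Pd i : ℝ) := by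
    rw [hcR, hsP]
    ring
  rw [e1, e2, integral_shift E f hf Y hY i hi s] at hy'
  have := hx'.trans hy'.symm
  exact mul_right_cancel₀ (by positivity) this

end Construction

/-! ### Representation of the sets A_i and the product formula -/

section Construction2

variable (E : ExplicitConstruction) (f : ℝ → ℝ)
  (hf : ∀ x, f x = ∑ j ∈ Finset.range E.d, Real.cos (2 * Real.pi * 2 ^ j * x))
  (Y : ℕ → ℝ → ℝ)
  (hY : ∀ i x, Y i x = ∑ k ∈ Block E.R i, f ((E.n k : ℝ) * x))
  (Z : ℕ → ℝ → ℝ)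
  (hZ : ∀ i, Z i = (volume.restrict (Set.Icc (0:ℝ) 1))[Y i | Ffield i])
  (A : ℕ → Set ℝ)
  (hA : ∀ i, A i = {x ∈ Set.Icc (0:ℝ) 1 |
      ((E.d : ℝ) * Real.sqrt E.ε / 2 - 2) *
          Real.sqrt (2 * (E.R : ℝ) ^ i * Real.log (Real.log ((E.R : ℝ) ^ i)))
        - 2 * (E.d : ℝ) ^ 2 * i - 3 ≤ |Z i x|})

include hf hY hZ hA in
lemma A_rep (i : ℕ) (hi : 1 ≤ i) :
    ∃ t : ℤ → Prop, A i ∩ Set.Ico (0:ℝ) 1 =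
      {x : ℝ | x ∈ Set.Ico (0:ℝ) 1 ∧ t (⌊(Qd i : ℝ) * x⌋ % (gd i : ℤ))} := by
  set c : ℝ := ((E.d : ℝ) * Real.sqrt E.ε / 2 - 2) *
      Real.sqrt (2 * (E.R : ℝ) ^ i * Real.log (Real.log ((E.R : ℝ) ^ i)))
    - 2 * (E.d : ℝ) ^ 2 * i - 3 with hc
  refine ⟨fun r => ∃ u : ℝ, u ∈ Set.Ico (0:ℝ) 1 ∧
    ⌊(Qd i : ℝ) * u⌋ % (gd i : ℤ) = r ∧ c ≤ |Z i u|, ?_⟩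
  ext x
  simp only [Set.mem_inter_iff, Set.mem_setOf_eq, hA i]
  constructor
  · rintro ⟨⟨hxIcc, hxZ⟩, hxIco⟩
    exact ⟨hxIco, x, hxIco, rfl, hxZ⟩
  · rintro ⟨hxIco, u, huIco, hmod, huZ⟩
    have hZeq : Z i x = Z i u :=
      Z_eq_of_mod E f hf Y hY Z hZ i hi hxIco huIco hmod.symm
    exact ⟨⟨Set.Ico_subset_Icc_self hxIco, by rw [hZeq]; exact huZ⟩, hxIco⟩

include hf hY hZ hA in
lemma rep_inter (s : Finset ℕ) : ∀ (P : ℕ), 0 < P → (∀ b ∈ s, Qd (b + 1) ∣ P) →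
    ∃ p : ℤ → Prop, (Set.Ico (0:ℝ) 1 ∩ ⋂ b ∈ s, (A (b + 1) ∩ Set.Ico (0:ℝ) 1)) =
      {x : ℝ | x ∈ Set.Ico (0:ℝ) 1 ∧ p ⌊(P : ℝ) * x⌋} := by
  classical
  induction s using Finset.induction_on with
  | empty =>
    intro P hP hdvd
    refine ⟨fun _ => True, ?_⟩
    ext x
    simp
  | insert _ _ ha IH =>
    rename_i a s
    intro P hP hdvd
    obtain ⟨p, hp⟩ := IH P hP (fun b hb => hdvd b (Finset.mem_insert_of_mem hb))
    obtain ⟨t, ht⟩ := A_rep E f hf Y hY Z hZ A hA (a + 1) (by omega)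
    have hdvda : Qd (a + 1) ∣ P := hdvd a (Finset.mem_insert_self a s)
    refine ⟨fun n => p n ∧ t ((n / ((P / Qd (a + 1) : ℕ) : ℤ)) % (gd (a + 1) : ℤ)), ?_⟩
    have hsplit : Set.Ico (0:ℝ) 1 ∩ ⋂ b ∈ insert a s, (A (b + 1) ∩ Set.Ico (0:ℝ) 1) =
        (Set.Ico (0:ℝ) 1 ∩ ⋂ b ∈ s, (A (b + 1) ∩ Set.Ico (0:ℝ) 1)) ∩
          (A (a + 1) ∩ Set.Ico (0:ℝ) 1) := by
      rw [Finset.set_biInter_insert]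
      ext z
      simp only [Set.mem_inter_iff, Set.mem_iInter]
      tauto
    rw [hsplit, hp, ht]
    ext x
    simp only [Set.mem_inter_iff, Set.mem_setOf_eq]
    have hfl : ⌊(Qd (a + 1) : ℝ) * x⌋ = ⌊(P : ℝ) * x⌋ / ((P / Qd (a + 1) : ℕ) : ℤ) :=
      floor_mul_dvd x (Qd_pos (a + 1)) hP hdvda
    rw [hfl]
    tauto

include hf hY hZ hA in
lemma vol_prod (s : Finset ℕ) :
    volume (Set.Ico (0:ℝ) 1 ∩ ⋂ b ∈ s, (A (b + 1) ∩ Set.Ico (0:ℝ) 1)) =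
      ∏ b ∈ s, volume (A (b + 1) ∩ Set.Ico (0:ℝ) 1) := by
  classical
  induction s using Finset.induction_on_max with
  | empty => simp [Real.volume_Ico]
  | insert a s hlt IH =>
    have ha : a ∉ s := fun h => lt_irrefl a (hlt a h)
    obtain ⟨p, hp⟩ := rep_inter E f hf Y hY Z hZ A hA s (Pd (a + 1)) (Pd_pos _)
      (fun b hb => Qd_dvd_Pd (hlt b hb))
    obtain ⟨t, ht⟩ := A_rep E f hf Y hY Z hZ A hA (a + 1) (by omega)
    letI := Classical.decPred p
    letI := Classical.decPred t
    have hQP := Pd_mul_gd (a + 1)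
    have hsplit : Set.Ico (0:ℝ) 1 ∩ ⋂ b ∈ insert a s, (A (b + 1) ∩ Set.Ico (0:ℝ) 1) =
        {x : ℝ | x ∈ Set.Ico (0:ℝ) 1 ∧ p ⌊(Pd (a + 1) : ℝ) * x⌋ ∧
          t (⌊((Pd (a + 1) * gd (a + 1) : ℕ) : ℝ) * x⌋ % (gd (a + 1) : ℤ))} := by
      rw [Finset.set_biInter_insert]
      have h1 : Set.Ico (0:ℝ) 1 ∩
          ((A (a + 1) ∩ Set.Ico (0:ℝ) 1) ∩ ⋂ b ∈ s, (A (b + 1) ∩ Set.Ico (0:ℝ) 1)) =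
          (Set.Ico (0:ℝ) 1 ∩ ⋂ b ∈ s, (A (b + 1) ∩ Set.Ico (0:ℝ) 1)) ∩
            (A (a + 1) ∩ Set.Ico (0:ℝ) 1) := by
        ext z
        simp only [Set.mem_inter_iff, Set.mem_iInter]
        tauto
      rw [h1, hp, ht]
      ext x
      simp only [Set.mem_inter_iff, Set.mem_setOf_eq, hQP]
      tauto
    have hsecond : {x : ℝ | x ∈ Set.Ico (0:ℝ) 1 ∧
        t (⌊((Pd (a + 1) * gd (a + 1) : ℕ) : ℝ) * x⌋ % (gd (a + 1) : ℤ))} =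
        A (a + 1) ∩ Set.Ico (0:ℝ) 1 := by
      rw [ht]
      ext x
      simp only [Set.mem_setOf_eq, hQP]
    rw [hsplit, measB _ _ (Pd_pos _) (gd_pos _) p t, hsecond, ← hp, IH,
      Finset.prod_insert ha]
    ring

end Construction2

/-! ### A measure helper -/

lemma vol_eq_of_diff_singleton {S T : Set ℝ} (hTS : T ⊆ S) (h : S \ T ⊆ {1}) :
    volume S = volume T := by
  refine le_antisymm ?_ (measure_mono hTS)
  calc volume S ≤ volume (T ∪ {1}) := by
        apply measure_mono
        intro x hx
        by_cases hxT : x ∈ T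
        · exact Or.inl hxT
        · exact Or.inr (h ⟨hx, hxT⟩)
    _ ≤ volume T + volume {1} := measure_union_le _ _
    _ = volume T := by simp

end Indep18

open Indep18

theorem statement18 (E : ExplicitConstruction) (f : ℝ → ℝ)
    (hf : ∀ x, f x = ∑ j ∈ Finset.range E.d, Real.cos (2 * Real.pi * 2 ^ j * x))
    (Y : ℕ → ℝ → ℝ)
    (hY : ∀ i x, Y i x = ∑ k ∈ Block E.R i, f ((E.n k : ℝ) * x))
    (Z : ℕ → ℝ → ℝ)
    (hZ : ∀ i, Z i = (volume.restrict (Set.Icc (0:ℝ) 1))[Y i | Ffield i])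
    (A : ℕ → Set ℝ)
    (hA : ∀ i, A i = {x ∈ Set.Icc (0:ℝ) 1 |
      ((E.d : ℝ) * Real.sqrt E.ε / 2 - 2) *
          Real.sqrt (2 * (E.R : ℝ) ^ i * Real.log (Real.log ((E.R : ℝ) ^ i)))
        - 2 * (E.d : ℝ) ^ 2 * i - 3 ≤ |Z i x|}) :
    ProbabilityTheory.iIndepSet (fun i : ℕ => A (i + 1))
      (volume.restrict (Set.Icc (0:ℝ) 1)) := by
  classical
  have hZmeas : ∀ j, Measurable (Z j) := by
    intro j
    have hsm : StronglyMeasurable[Ffield j] (Z j) := by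
      rw [hZ j]; exact stronglyMeasurable_condExp
    exact (hsm.mono (Ffield_le j)).measurable
  have hAmeas : ∀ j, MeasurableSet (A j) := by
    intro j
    rw [hA j]
    exact measurableSet_Icc.inter (measurableSet_le measurable_const (hZmeas j).abs)
  haveI : IsProbabilityMeasure (volume.restrict (Set.Icc (0:ℝ) 1)) := by
    constructor
    rw [Measure.restrict_apply MeasurableSet.univ, Set.univ_inter, Real.volume_Icc]
    simp
  rw [ProbabilityTheory.iIndepSet_iff_meas_biInter (fun j => hAmeas (j + 1))]
  intro s
  have hsub : ∀ j, A j ⊆ Set.Icc (0:ℝ) 1 := by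
    intro j
    rw [hA j]
    exact fun x hx => hx.1
  have hL : (volume.restrict (Set.Icc (0:ℝ) 1)) (⋂ b ∈ s, A (b + 1)) =
      volume (Set.Ico (0:ℝ) 1 ∩ ⋂ b ∈ s, (A (b + 1) ∩ Set.Ico (0:ℝ) 1)) := by
    rw [Measure.restrict_apply' measurableSet_Icc]
    apply vol_eq_of_diff_singleton
    · rintro x ⟨hxIco, hxInt⟩
      rw [Set.mem_iInter₂] at hxInt
      refine ⟨?_, Set.Ico_subset_Icc_self hxIco⟩
      rw [Set.mem_iInter₂]
      exact fun b hb => (hxInt b hb).1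
    · rintro x ⟨⟨hxInt, hxIcc⟩, hxT⟩
      by_contra hx1
      rw [Set.mem_singleton_iff] at hx1
      apply hxT
      have hxIco : x ∈ Set.Ico (0:ℝ) 1 := by
        constructor
        · exact hxIcc.1
        · rcases lt_or_eq_of_le hxIcc.2 with h | h
          · exact h
          · exact absurd h hx1
      refine ⟨hxIco, ?_⟩
      rw [Set.mem_iInter₂] at hxInt ⊢
      exact fun b hb => ⟨hxInt b hb, hxIco⟩
  have hR : ∀ b : ℕ, (volume.restrict (Set.Icc (0:ℝ) 1)) (A (b + 1)) =
      volume (A (b + 1) ∩ Set.Ico (0:ℝ) 1) := by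
    intro b
    rw [Measure.restrict_apply' measurableSet_Icc]
    apply vol_eq_of_diff_singleton
    · exact fun x hx => ⟨hx.1, Set.Ico_subset_Icc_self hx.2⟩
    · rintro x ⟨⟨hxA, hxIcc⟩, hxT⟩
      by_contra hx1
      rw [Set.mem_singleton_iff] at hx1
      apply hxT
      have hxIco : x ∈ Set.Ico (0:ℝ) 1 := by
        constructor
        · exact hxIcc.1
        · rcases lt_or_eq_of_le hxIcc.2 with h | h
          · exact h
          · exact absurd h hx1
      exact ⟨hxA, hxIco⟩
  rw [hL, vol_prod E f hf Y hY Z hZ A hA s]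
  exact Finset.prod_congr rfl fun b _ => (hR b).symm
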